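/- Let Z = {S_1,...,S_m} be a zipper on a complete metric space X with vertices z_0,...,z_m and signature ε. Then the attractor K of Z is a connected compact set containing all the vertices z_0,...,z_m. -/

import Mathlib

open Metric Set

/-- A contraction mapping a nonempty closed set into itself has its fixed point in the set. -/
lemma fix_mem_aux {X : Type*} [MetricSpace X] [CompleteSpace X] {f : X → X} {c : NNReal}
    (hc : c < 1) (hf : LipschitzWith c f) {K : Set X} (hKne : K.Nonempty) (hKcl : IsClosed K)
    (hinv : Set.MapsTo f K K) {x : X} (hx : f x = x) : x ∈ K := by
  haveI : Nonempty X := ⟨x⟩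
  have hcf : ContractingWith c f := ⟨hc, hf⟩
  obtain ⟨a, ha⟩ := hKne
  have hiter : ∀ n, f^[n] a ∈ K := by
    intro n
    induction n with
    | zero => exact ha
    | succ n ih => rw [Function.iterate_succ_apply']; exact hinv ih
  have hx' : x = hcf.fixedPoint := hcf.fixedPoint_unique hx
  rw [hx']
  exact hKcl.mem_of_tendsto (hcf.tendsto_iterate_fixedPoint a)
    (Filter.Eventually.of_forall hiter)

/-- ε-chains within a set `K`. -/
def chainIn {X : Type*} [MetricSpace X] (K : Set X) (e : ℝ) : X → X → Prop :=
  Relation.ReflTransGen (fun a b => a ∈ K ∧ b ∈ K ∧ dist a b ≤ e)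

lemma chainIn.mono {X : Type*} [MetricSpace X] {K : Set X} {e e' : ℝ} (h : e ≤ e')
    {x y : X} (hc : chainIn K e x y) : chainIn K e' x y :=
  Relation.ReflTransGen.mono (r := fun a b => a ∈ K ∧ b ∈ K ∧ dist a b ≤ e)
    (p := fun a b => a ∈ K ∧ b ∈ K ∧ dist a b ≤ e')
    (fun _ _ ⟨ha, hb, hd⟩ => ⟨ha, hb, hd.trans h⟩) x y hc

lemma chainIn.symm {X : Type*} [MetricSpace X] {K : Set X} {e : ℝ}
    {x y : X} (hc : chainIn K e x y) : chainIn K e y x :=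
  (@Relation.ReflTransGen.stdSymm _ (fun a b => a ∈ K ∧ b ∈ K ∧ dist a b ≤ e)
    ⟨fun _ _ ⟨ha, hb, hd⟩ => ⟨hb, ha, by rwa [dist_comm]⟩⟩).symm _ _ hc

lemma chainIn.map {X : Type*} [MetricSpace X] {K K' : Set X} {e : ℝ} {c : NNReal}
    {f : X → X} (hf : LipschitzWith c f) (hinv : ∀ p ∈ K, f p ∈ K')
    {x y : X} (hc : chainIn K e x y) : chainIn K' ((c : ℝ) * e) (f x) (f y) := by
  induction hc with
  | refl => exact Relation.ReflTransGen.refl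
  | tail _ hbc ih =>
    obtain ⟨hb, hc2, hd⟩ := hbc
    exact ih.tail ⟨hinv _ hb, hinv _ hc2,
      (hf.dist_le_mul _ _).trans (mul_le_mul_of_nonneg_left hd c.2)⟩

theorem stmt10 {X : Type*} [MetricSpace X] [CompleteSpace X]
    {m : ℕ} (hm : 1 ≤ m) (S : Fin m → X → X) (r : Fin m → ℝ)
    (hr : ∀ i, r i < 1) (hr0 : ∀ i, 0 ≤ r i)
    (hS : ∀ i, LipschitzWith ⟨r i, hr0 i⟩ (S i))
    (z : ℕ → X) (ε : Fin m → ℕ) (hε : ∀ i, ε i ≤ 1)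
    (hz0 : ∀ i : Fin m, S i (z 0) = z (i.1 + ε i))
    (hzm : ∀ i : Fin m, S i (z m) = z (i.1 + 1 - ε i))
    (K : Set X) (hKne : K.Nonempty) (hKc : IsCompact K)
    (hK : K = ⋃ i, S i '' K) :
    IsConnected K ∧ ∀ j : ℕ, j ≤ m → z j ∈ K := by
  -- basic facts
  have hinv : ∀ i : Fin m, ∀ p ∈ K, S i p ∈ K := by
    intro i p hp
    rw [hK]; exact Set.mem_iUnion.2 ⟨i, ⟨p, hp, rfl⟩⟩
  have hrc : ∀ i : Fin m, (⟨r i, hr0 i⟩ : NNReal) < 1 := by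
    intro i; exact_mod_cast hr i
  -- orientation of each map on endpoints
  have hor : ∀ i : Fin m, (S i (z 0) = z i.1 ∧ S i (z m) = z (i.1 + 1)) ∨
      (S i (z 0) = z (i.1 + 1) ∧ S i (z m) = z i.1) := by
    intro i
    rcases Nat.le_one_iff_eq_zero_or_eq_one.1 (hε i) with h | h
    · left; constructor
      · rw [hz0 i, h]; simp
      · rw [hzm i, h]; simp
    · right; constructor
      · rw [hz0 i, h]
      · rw [hzm i, h]; simp
  -- the vertices z 0 and z m are in K
  set i0 : Fin m := ⟨0, hm⟩ with hi0
  set iM : Fin m := ⟨m - 1, by omega⟩ with hiM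
  have hiM1 : iM.1 + 1 = m := by simp [hiM]; omega
  have hz0m : z 0 ∈ K ∧ z m ∈ K := by
    rcases hor i0 with ⟨h00, h0m⟩ | ⟨h00, h0m⟩
    · -- S i0 (z 0) = z 0 : fixed point
      have h0K : z 0 ∈ K :=
        fix_mem_aux (hrc i0) (hS i0) hKne hKc.isClosed
          (fun p hp => hinv i0 p hp) h00
      refine ⟨h0K, ?_⟩
      rcases hor iM with ⟨hM0, hMm⟩ | ⟨hM0, hMm⟩
      · -- S iM (z m) = z m : fixed point
        rw [hiM1] at hMm
        exact fix_mem_aux (hrc iM) (hS iM) hKne hKc.isClosed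
          (fun p hp => hinv iM p hp) hMm
      · rw [hiM1] at hM0
        rw [← hM0]; exact hinv iM _ h0K
    · -- S i0 (z m) = z 0
      rcases hor iM with ⟨hM0, hMm⟩ | ⟨hM0, hMm⟩
      · rw [hiM1] at hMm
        have hmK : z m ∈ K :=
          fix_mem_aux (hrc iM) (hS iM) hKne hKc.isClosed
            (fun p hp => hinv iM p hp) hMm
        exact ⟨h0m ▸ hinv i0 _ hmK, hmK⟩
      · -- z 0 is the fixed point of S i0 ∘ S iM
        rw [hiM1] at hM0
        have hfix : (S i0 ∘ S iM) (z 0) = z 0 := by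
          simp only [Function.comp_apply, hM0, h0m]; rfl
        have hcomp : LipschitzWith (⟨r i0, hr0 i0⟩ * ⟨r iM, hr0 iM⟩) (S i0 ∘ S iM) :=
          (hS i0).comp (hS iM)
        have hlt : (⟨r i0, hr0 i0⟩ * ⟨r iM, hr0 iM⟩ : NNReal) < 1 := by
          exact mul_lt_one_of_nonneg_of_lt_one_left (zero_le) (hrc i0) (hrc iM).le
        have h0K : z 0 ∈ K :=
          fix_mem_aux hlt hcomp hKne hKc.isClosed
            (fun p hp => hinv i0 _ (hinv iM p hp)) hfix
        exact ⟨h0K, hM0 ▸ hinv iM _ h0K⟩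
    -- all vertices in K
  obtain ⟨h0K, hmK⟩ := hz0m
  have hvert : ∀ j : ℕ, j ≤ m → z j ∈ K := by
    intro j hj
    rcases eq_or_lt_of_le hj with rfl | hjm
    · exact hmK
    · rcases hor ⟨j, hjm⟩ with ⟨h1, _⟩ | ⟨_, h2⟩
      · exact h1 ▸ hinv _ _ h0K
      · exact h2 ▸ hinv _ _ hmK
  refine ⟨?_, hvert⟩
  -- contraction ratio bound
  have hFne : (Finset.univ : Finset (Fin m)).Nonempty := by
    refine ⟨i0, Finset.mem_univ _⟩
  set ρ : ℝ := Finset.univ.sup' hFne r with hρ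
  have hρ0 : 0 ≤ ρ := le_trans (hr0 i0) (Finset.le_sup' r (Finset.mem_univ i0))
  have hρ1 : ρ < 1 := by
    rw [hρ, Finset.sup'_lt_iff]
    intro i _; exact hr i
  have hρi : ∀ i : Fin m, r i ≤ ρ := fun i => Finset.le_sup' r (Finset.mem_univ i)
  set D : ℝ := Metric.diam K with hD
  -- chains of size ρ^n * D between any two points of K
  have hchainPow : ∀ n : ℕ, ∀ x ∈ K, ∀ y ∈ K, chainIn K (ρ ^ n * D) x y := by
    intro n
    induction n with
    | zero =>
      intro x hx y hy
      refine Relation.ReflTransGen.single ⟨hx, hy, ?_⟩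
      rw [pow_zero, one_mul]
      exact Metric.dist_le_diam_of_mem hKc.isBounded hx hy
    | succ n ih =>
      -- key: each point of S i '' K chains to both endpoints z i and z (i+1)
      have key : ∀ (i : Fin m), ∀ x ∈ S i '' K,
          chainIn K (ρ ^ (n + 1) * D) x (z i.1) ∧
          chainIn K (ρ ^ (n + 1) * D) x (z (i.1 + 1)) := by
        intro i x hx
        obtain ⟨x', hx', rfl⟩ := hx
        have hmap : ∀ w ∈ K, chainIn K (ρ ^ (n + 1) * D) (S i x') (S i w) := by
          intro w hw
          have := chainIn.map (hS i) (hinv i) (ih x' hx' w hw)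
          refine this.mono ?_
          have hDn : 0 ≤ ρ ^ n * D := by
            apply mul_nonneg (pow_nonneg hρ0 n) Metric.diam_nonneg
          calc (r i : ℝ) * (ρ ^ n * D) ≤ ρ * (ρ ^ n * D) := by
                exact mul_le_mul_of_nonneg_right (hρi i) hDn
            _ = ρ ^ (n + 1) * D := by ring
        rcases hor i with ⟨h1, h2⟩ | ⟨h1, h2⟩
        · exact ⟨h1 ▸ hmap _ h0K, h2 ▸ hmap _ hmK⟩
        · exact ⟨h2 ▸ hmap _ hmK, h1 ▸ hmap _ h0K⟩
      -- chains between consecutive vertices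
      have hstepv : ∀ k : ℕ, (hk : k < m) →
          chainIn K (ρ ^ (n + 1) * D) (z k) (z (k + 1)) := by
        intro k hk
        have hzk : z k ∈ S ⟨k, hk⟩ '' K := by
          rcases hor ⟨k, hk⟩ with ⟨h1, _⟩ | ⟨_, h2⟩
          · exact ⟨z 0, h0K, h1⟩
          · exact ⟨z m, hmK, h2⟩
        exact ((key ⟨k, hk⟩ _ hzk).1.symm.trans (key ⟨k, hk⟩ _ hzk).2)
      -- chains between any two vertices
      have hvchain : ∀ d a : ℕ, a + d ≤ m →
          chainIn K (ρ ^ (n + 1) * D) (z a) (z (a + d)) := by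
        intro d
        induction d with
        | zero => intro a _; exact Relation.ReflTransGen.refl
        | succ d ihd =>
          intro a ha
          have h1 := ihd a (by omega)
          have h2 := hstepv (a + d) (by omega)
          exact h1.trans (by rw [show a + (d + 1) = a + d + 1 by ring]; exact h2)
      have hvchain' : ∀ a b : ℕ, a ≤ m → b ≤ m →
          chainIn K (ρ ^ (n + 1) * D) (z a) (z b) := by
        intro a b ha hb
        rcases le_total a b with h | h
        · have := hvchain (b - a) a (by omega)
          rwa [show a + (b - a) = b by omega] at this
        · have := hvchain (a - b) b (by omega)
          rw [show b + (a - b) = a by omega] at this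
          exact this.symm
      intro x hx y hy
      rw [hK] at hx hy
      obtain ⟨_, ⟨i, rfl⟩, hx⟩ := hx
      obtain ⟨_, ⟨j, rfl⟩, hy⟩ := hy
      exact ((key i x hx).1.trans (hvchain' i.1 j.1 i.2.le j.2.le)).trans
        (key j y hy).1.symm
  -- chains of any positive size
  have hchain : ∀ e : ℝ, 0 < e → ∀ x ∈ K, ∀ y ∈ K, chainIn K e x y := by
    intro e he x hx y hy
    have htend : Filter.Tendsto (fun n : ℕ => ρ ^ n * D) Filter.atTop (nhds 0) := by
      have := (tendsto_pow_atTop_nhds_zero_of_lt_one hρ0 hρ1).mul_const D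
      simpa using this
    obtain ⟨n, hn⟩ := (htend.eventually (eventually_lt_nhds he)).exists
    exact (hchainPow n x hx y hy).mono hn.le
  -- connectedness
  refine ⟨hKne, ?_⟩
  rintro U V hU hV hUV ⟨a, haK, haU⟩ ⟨b, hbK, hbV⟩
  by_contra hcon
  rw [Set.not_nonempty_iff_eq_empty] at hcon
  have hdisj : ∀ p ∈ K, ¬(p ∈ U ∧ p ∈ V) := by
    intro p hp hpUV
    exact Set.eq_empty_iff_forall_notMem.1 hcon p ⟨hp, hpUV.1, hpUV.2⟩
  set A : Set X := K ∩ Vᶜ with hA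
  set B : Set X := K ∩ Uᶜ with hB
  have hAc : IsCompact A := hKc.inter_right hV.isClosed_compl
  have hBcl : IsClosed B := hKc.isClosed.inter hU.isClosed_compl
  have haA : a ∈ A := ⟨haK, fun hv => hdisj a haK ⟨haU, hv⟩⟩
  have hbB : b ∈ B := ⟨hbK, fun hu => hdisj b hbK ⟨hu, hbV⟩⟩
  have hBne : B.Nonempty := ⟨b, hbB⟩
  -- positive distance between A and B
  have hposA : ∀ p ∈ A, 0 < infDist p B := by
    intro p hp
    rw [← hBcl.notMem_iff_infDist_pos hBne]
    intro hpB
    rcases hUV hp.1 with h | h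
    · exact hpB.2 h
    · exact hp.2 h
  obtain ⟨p0, hp0, hmin⟩ := hAc.exists_isMinOn ⟨a, haA⟩
    (continuous_infDist_pt B).continuousOn
  set δ : ℝ := infDist p0 B with hδ
  have hδ0 : 0 < δ := hposA p0 hp0
  -- every point chained to a with steps ≤ δ/2 stays in A
  have hmain : ∀ y : X, chainIn K (δ / 2) a y → y ∈ A := by
    intro y hy
    induction hy with
    | refl => exact haA
    | tail _ hbc ihy =>
      obtain ⟨hb1, hc1, hdle⟩ := hbc
      rename_i p q _
      by_contra hqA
      have hqB : q ∈ B := by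
        refine ⟨hc1, ?_⟩
        intro hqU
        refine hqA ⟨hc1, ?_⟩
        intro hqV
        exact hdisj q hc1 ⟨hqU, hqV⟩
      have h1 : δ ≤ dist p q := le_trans (hmin ihy) (infDist_le_dist_of_mem hqB)
      linarith
  exact (hmain b (hchain (δ / 2) (by linarith) a haK b hbK)).2 hbV
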